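/- Let q ≥ 1 and let (G,L) be a list-coloring instance with color set {1,…,q} such that |L(u)| ≥ deg_G(u)+1 for every vertex u. Let v be a vertex of G with neighbors v_1,…,v_d listed in a fixed order, and let i ∈ L(v). For 1 ≤ k ≤ d and each color j define the color lists L_{k,j} on G_v by L_{k,j}(u) = L(u)∖{j} if u = v_ℓ for some ℓ < k, and L_{k,j}(u) = L(u) otherwise. Then Pr_{G,L}[c(v)=i] = ∏_{k=1}^{d} (1 − Pr_{G_v,L_{k,i}}[c(v_k)=i]) / ( Σ_{j∈L(v)} ∏_{k=1}^{d} (1 − Pr_{G_v,L_{k,j}}[c(v_k)=j]) ). -/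

import Mathlib

open Finset

variable {V : Type} [Fintype V] [DecidableEq V]

/-- The set of proper colorings of the list-coloring instance `(G, L)` with color set `Fin q`. -/
def properColorings (G : SimpleGraph V) [DecidableRel G.Adj]
    (q : ℕ) (L : V → Finset (Fin q)) : Finset (V → Fin q) :=
  Finset.univ.filter
    (fun c => (∀ u, c u ∈ L u) ∧ ∀ u w : V, G.Adj u w → c u ≠ c w)

/-- The marginal probability `Pr_{G,L}[c(v) = i]` under the uniform distribution on
proper colorings of `(G, L)`. -/
noncomputable def margin (G : SimpleGraph V) [DecidableRel G.Adj]
    (q : ℕ) (L : V → Finset (Fin q)) (v : V) (i : Fin q) : ℝ :=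
  (((properColorings G q L).filter (fun c => c v = i)).card : ℝ) /
    ((properColorings G q L).card : ℝ)

/-- The graph `G_v` obtained from `G` by deleting the vertex `v` and all its incident
edges (formalized on the same vertex set by isolating `v`; since the deleted vertex is
isolated, marginal probabilities at the remaining vertices are unchanged). -/
def deleteVertex (G : SimpleGraph V) (v : V) : SimpleGraph V where
  Adj a b := G.Adj a b ∧ a ≠ v ∧ b ≠ v
  symm := ⟨fun a b ⟨h, ha, hb⟩ => ⟨h.symm, hb, ha⟩⟩
  loopless := ⟨fun a h => G.loopless.irrefl a h.1⟩

instance (G : SimpleGraph V) [DecidableRel G.Adj] (v : V) :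
    DecidableRel (deleteVertex G v).Adj :=
  fun a b => inferInstanceAs (Decidable (G.Adj a b ∧ a ≠ v ∧ b ≠ v))

/-- The color lists `L_{k,j}` : remove color `j` from the lists of the neighbors
`v_ℓ` with `ℓ < k` (0-indexed, the neighbors are listed by `vs`). -/
def modLists {q : ℕ} (L : V → Finset (Fin q)) (vs : List V) (k : ℕ) (j : Fin q) :
    V → Finset (Fin q) :=
  fun u => if u ∈ vs.take k then (L u).erase j else L u

lemma mem_properColorings {G : SimpleGraph V} [DecidableRel G.Adj] {q : ℕ}
    {L : V → Finset (Fin q)} {c : V → Fin q} :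
    c ∈ properColorings G q L ↔
      (∀ u, c u ∈ L u) ∧ ∀ u w : V, G.Adj u w → c u ≠ c w := by
  simp [properColorings]

lemma exists_proper_coloring {q : ℕ} :
    ∀ (n : ℕ) (G : SimpleGraph V) [DecidableRel G.Adj] (L : V → Finset (Fin q)),
      G.edgeFinset.card ≤ n → (∀ u, G.degree u + 1 ≤ (L u).card) →
      (properColorings G q L).Nonempty := by
  intro n
  induction n with
  | zero =>
    intro G _ L hcard hL
    have hne : ∀ u, (L u).Nonempty := fun u =>
      Finset.card_pos.mp (lt_of_lt_of_le (Nat.succ_pos _) (hL u))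
    have hnoadj : ∀ u w : V, ¬ G.Adj u w := by
      intro u w h
      have : s(u, w) ∈ G.edgeFinset := SimpleGraph.mem_edgeFinset.mpr h
      have := Finset.card_pos.mpr ⟨_, this⟩
      omega
    exact ⟨fun u => (hne u).choose, mem_properColorings.mpr
      ⟨fun u => (hne u).choose_spec, fun u w h => absurd h (hnoadj u w)⟩⟩
  | succ n ih =>
    intro G _ L hcard hL
    by_cases hE : ∀ u w : V, ¬ G.Adj u w
    · have hne : ∀ u, (L u).Nonempty := fun u =>
        Finset.card_pos.mp (lt_of_lt_of_le (Nat.succ_pos _) (hL u))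
      exact ⟨fun u => (hne u).choose, mem_properColorings.mpr
        ⟨fun u => (hne u).choose_spec, fun u w h => absurd h (hE u w)⟩⟩
    · push_neg at hE
      obtain ⟨a, b, hab⟩ := hE
      set G' := deleteVertex G a with hG'
      have hle : G' ≤ G := fun u w h => h.1
      have hsub : G'.edgeFinset ⊆ G.edgeFinset := SimpleGraph.edgeFinset_mono hle
      have hmem : s(a, b) ∈ G.edgeFinset := SimpleGraph.mem_edgeFinset.mpr hab
      have hnmem : s(a, b) ∉ G'.edgeFinset := by
        simp only [SimpleGraph.mem_edgeFinset, SimpleGraph.mem_edgeSet]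
        intro h
        exact h.2.1 rfl
      have hlt : G'.edgeFinset.card < G.edgeFinset.card :=
        Finset.card_lt_card ⟨hsub, fun h => hnmem (h hmem)⟩
      have hdegle : ∀ u, G'.degree u ≤ G.degree u := by
        intro u
        apply Finset.card_le_card
        intro w hw
        rw [SimpleGraph.mem_neighborFinset] at hw ⊢
        exact hw.1
      obtain ⟨c', hc'⟩ := ih G' L (by omega)
        (fun u => le_trans (by have := hdegle u; omega) (hL u))
      rw [mem_properColorings] at hc'
      obtain ⟨hc1, hc2⟩ := hc'
      have hsd : ((L a) \ ((G.neighborFinset a).image c')).Nonempty := by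
        rw [← Finset.card_pos]
        have h1 : ((G.neighborFinset a).image c').card ≤ G.degree a :=
          Finset.card_image_le
        have h2 := Finset.le_card_sdiff ((G.neighborFinset a).image c') (L a)
        have := hL a
        omega
      obtain ⟨j, hj⟩ := hsd
      rw [Finset.mem_sdiff] at hj
      refine ⟨Function.update c' a j, mem_properColorings.mpr ⟨?_, ?_⟩⟩
      · intro u
        by_cases h : u = a
        · subst h; simpa using hj.1
        · simpa [Function.update_of_ne h] using hc1 u
      · intro u w huw
        by_cases hu : u = a <;> by_cases hw : w = a
        · subst hu hw; exact absurd huw (G.irrefl)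
        · subst hu
          simp only [Function.update_self, Function.update_of_ne hw]
          intro h
          exact hj.2 (Finset.mem_image.mpr ⟨w, (SimpleGraph.mem_neighborFinset _ _ _).mpr huw, h.symm⟩)
        · subst hw
          simp only [Function.update_self, Function.update_of_ne hu]
          intro h
          exact hj.2 (Finset.mem_image.mpr ⟨u, (SimpleGraph.mem_neighborFinset _ _ _).mpr huw.symm, h⟩)
        · simp only [Function.update_of_ne hu, Function.update_of_ne hw]
          exact hc2 u w ⟨huw, hu, hw⟩

lemma fiber_card_eq {q : ℕ} (H : SimpleGraph V) [DecidableRel H.Adj] (v : V)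
    (hiso : ∀ a b, H.Adj a b → a ≠ v ∧ b ≠ v)
    (L : V → Finset (Fin q)) {j j' : Fin q} (hj : j ∈ L v) (hj' : j' ∈ L v) :
    ((properColorings H q L).filter (fun c => c v = j)).card =
    ((properColorings H q L).filter (fun c => c v = j')).card := by
  have key : ∀ (a b : Fin q), a ∈ L v → ∀ c, c ∈ (properColorings H q L).filter (fun c => c v = b) →
      Function.update c v a ∈ (properColorings H q L).filter (fun c => c v = a) := by
    intro a b ha c hc
    rw [Finset.mem_filter, mem_properColorings] at hc ⊢
    obtain ⟨⟨h1, h2⟩, h3⟩ := hc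
    refine ⟨⟨?_, ?_⟩, by simp⟩
    · intro u
      by_cases h : u = v
      · subst h; simpa using ha
      · simpa [Function.update_of_ne h] using h1 u
    · intro u w huw
      obtain ⟨hu, hw⟩ := hiso u w huw
      simpa [Function.update_of_ne hu, Function.update_of_ne hw] using h2 u w huw
  refine Finset.card_bij' (fun c _ => Function.update c v j') (fun c _ => Function.update c v j)
    (fun c hc => key j' j hj' c hc) (fun c hc => key j j' hj c hc) ?_ ?_
  · intro c hc
    rw [Finset.mem_filter] at hc
    show Function.update (Function.update c v j') v j = c
    rw [Function.update_idem, ← hc.2, Function.update_eq_self]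
  · intro c hc
    rw [Finset.mem_filter] at hc
    show Function.update (Function.update c v j) v j' = c
    rw [Function.update_idem, ← hc.2, Function.update_eq_self]

lemma prod_div_telescope (f : ℕ → ℝ) :
    ∀ (d : ℕ), (∀ k, k ≤ d → f k ≠ 0) →
    ∏ k ∈ Finset.range d, (f (k + 1) / f k) = f d / f 0 := by
  intro d
  induction d with
  | zero => intro hf; rw [Finset.prod_range_zero, div_self (hf 0 le_rfl)]
  | succ d ih =>
    intro hf
    rw [Finset.prod_range_succ, ih (fun k hk => hf k (le_trans hk (Nat.le_succ d)))]
    have h0 := hf 0 (Nat.zero_le _)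
    have hd := hf d (Nat.le_succ d)
    field_simp

/-- The basic recursion for the marginal probability:
`Pr_{G,L}[c(v)=i] = ∏_k (1 − Pr_{G_v,L_{k,i}}[c(v_k)=i]) /
  Σ_{j∈L(v)} ∏_k (1 − Pr_{G_v,L_{k,j}}[c(v_k)=j])`. -/
theorem recursion_identity (q : ℕ) (hq : 1 ≤ q)
    (G : SimpleGraph V) [DecidableRel G.Adj] (L : V → Finset (Fin q))
    (hL : ∀ u : V, G.degree u + 1 ≤ (L u).card)
    (v : V) (vs : List V) (hnd : vs.Nodup)
    (hvs : vs.toFinset = G.neighborFinset v)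
    (i : Fin q) (hi : i ∈ L v) :
    margin G q L v i =
      (∏ k : Fin vs.length,
        (1 - margin (deleteVertex G v) q (modLists L vs k i) (vs.get k) i)) /
      (∑ j ∈ L v, ∏ k : Fin vs.length,
        (1 - margin (deleteVertex G v) q (modLists L vs k j) (vs.get k) j)) := by
  classical
  set H := deleteVertex G v with hH
  have hiso : ∀ a b : V, H.Adj a b → a ≠ v ∧ b ≠ v := fun a b h => ⟨h.2.1, h.2.2⟩
  have hadjvs : ∀ u, u ∈ vs ↔ G.Adj v u := by
    intro u
    rw [← List.mem_toFinset, hvs, SimpleGraph.mem_neighborFinset]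
  have hvnot : v ∉ vs := fun h => G.irrefl ((hadjvs v).mp h)
  have hHdeg : ∀ u, H.degree u ≤ G.degree u := by
    intro u; apply Finset.card_le_card; intro w hw
    rw [SimpleGraph.mem_neighborFinset] at hw ⊢; exact hw.1
  have hHdeg' : ∀ u, u ∈ vs → H.degree u + 1 ≤ G.degree u := by
    intro u hu
    have hvmem : v ∈ G.neighborFinset u :=
      (SimpleGraph.mem_neighborFinset _ _ _).mpr (((hadjvs u).mp hu).symm)
    have hsub : H.neighborFinset u ⊆ (G.neighborFinset u).erase v := by
      intro w hw
      rw [SimpleGraph.mem_neighborFinset] at hw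
      exact Finset.mem_erase.mpr ⟨hw.2.2, (SimpleGraph.mem_neighborFinset _ _ _).mpr hw.1⟩
    have h1 := Finset.card_le_card hsub
    rw [Finset.card_erase_of_mem hvmem] at h1
    have hpos : 0 < G.degree u := Finset.card_pos.mpr ⟨v, hvmem⟩
    unfold SimpleGraph.degree at *
    omega
  have hML : ∀ (k : ℕ) (j : Fin q) (u : V),
      H.degree u + 1 ≤ (modLists L vs k j u).card := by
    intro k j u
    unfold modLists
    by_cases h : u ∈ vs.take k
    · have hu : u ∈ vs := List.mem_of_mem_take h
      rw [if_pos h]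
      have h1 := hHdeg' u hu
      have h2 := hL u
      have h3 := Finset.pred_card_le_card_erase (s := L u) (a := j)
      omega
    · rw [if_neg h]
      have h1 := hHdeg u
      have h2 := hL u
      omega
  have hNpos : ∀ (k : ℕ) (j : Fin q),
      0 < (properColorings H q (modLists L vs k j)).card := by
    intro k j
    exact Finset.card_pos.mpr
      (exists_proper_coloring H.edgeFinset.card H _ le_rfl (hML k j))
  have hM0 : ∀ j : Fin q, modLists L vs 0 j = L := by
    intro j; funext u; simp [modLists]
  have htake : ∀ (k : ℕ) (hk : k < vs.length) (u : V),
      u ∈ vs.take (k + 1) ↔ u ∈ vs.take k ∨ u = vs.get ⟨k, hk⟩ := by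
    intro k hk u
    rw [← List.take_concat_get hk, List.concat_eq_append, List.mem_append]
    simp [List.get_eq_getElem]
  have hgetnot : ∀ (k : ℕ) (hk : k < vs.length), vs.get ⟨k, hk⟩ ∉ vs.take k := by
    intro k hk hmem
    have hnd' : (vs.take (k + 1)).Nodup := (List.take_sublist _ _).nodup hnd
    rw [← List.take_concat_get hk, List.concat_eq_append,
      List.nodup_append] at hnd'
    exact hnd'.2.2 _ hmem _ (List.mem_singleton.mpr rfl) rfl
  have hstep : ∀ (k : ℕ) (hk : k < vs.length) (j : Fin q),
      (properColorings H q (modLists L vs k j)).filter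
        (fun c => ¬ c (vs.get ⟨k, hk⟩) = j) =
      properColorings H q (modLists L vs (k + 1) j) := by
    intro k hk j
    ext c
    rw [Finset.mem_filter, mem_properColorings, mem_properColorings]
    constructor
    · rintro ⟨⟨h1, h2⟩, h3⟩
      refine ⟨?_, h2⟩
      intro u
      unfold modLists
      by_cases hu : u ∈ vs.take (k + 1)
      · rw [if_pos hu]
        rcases (htake k hk u).mp hu with h | h
        · have h5 := h1 u; unfold modLists at h5; rw [if_pos h] at h5; exact h5
        · have h5 := h1 u; unfold modLists at h5
          rw [h, if_neg (hgetnot k hk)] at h5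
          rw [h]
          exact Finset.mem_erase.mpr ⟨h3, h5⟩
      · have hu' : u ∉ vs.take k := fun h => hu ((htake k hk u).mpr (Or.inl h))
        rw [if_neg hu]
        have h5 := h1 u; unfold modLists at h5; rw [if_neg hu'] at h5; exact h5
    · rintro ⟨h1, h2⟩
      have h3 : ¬ c (vs.get ⟨k, hk⟩) = j := by
        have h5 := h1 (vs.get ⟨k, hk⟩); unfold modLists at h5
        rw [if_pos ((htake k hk _).mpr (Or.inr rfl))] at h5
        exact (Finset.mem_erase.mp h5).1
      refine ⟨⟨?_, h2⟩, h3⟩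
      intro u
      have h5 := h1 u
      unfold modLists at h5 ⊢
      by_cases hu : u ∈ vs.take k
      · rw [if_pos ((htake k hk u).mpr (Or.inl hu))] at h5
        rw [if_pos hu]; exact h5
      · rw [if_neg hu]
        by_cases hu2 : u ∈ vs.take (k + 1)
        · rw [if_pos hu2] at h5
          exact Finset.mem_of_mem_erase h5
        · rw [if_neg hu2] at h5; exact h5
  have hprod : ∀ j : Fin q,
      (∏ k : Fin vs.length,
        (1 - margin H q (modLists L vs k j) (vs.get k) j)) =
      ((properColorings H q (modLists L vs vs.length j)).card : ℝ) /
      ((properColorings H q L).card : ℝ) := by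
    intro j
    set f : ℕ → ℝ :=
      fun k => ((properColorings H q (modLists L vs k j)).card : ℝ) with hf
    have hfne : ∀ k, f k ≠ 0 := by
      intro k
      simp only [hf]
      exact_mod_cast (hNpos k j).ne'
    have hfac : ∀ k : Fin vs.length,
        1 - margin H q (modLists L vs k j) (vs.get k) j = f (↑k + 1) / f ↑k := by
      intro k
      have hcards :
          ((properColorings H q (modLists L vs ↑k j)).filter
            (fun c => c (vs.get k) = j)).card
          + (properColorings H q (modLists L vs (↑k + 1) j)).card
          = (properColorings H q (modLists L vs ↑k j)).card := by
        rw [← hstep ↑k k.isLt j]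
        exact Finset.card_filter_add_card_filter_not _
      have hc' :
          (((properColorings H q (modLists L vs ↑k j)).filter
            (fun c => c (vs.get k) = j)).card : ℝ) + f (↑k + 1) = f ↑k := by
        simp only [hf]
        exact_mod_cast hcards
      have hk0 : f ↑k ≠ 0 := hfne ↑k
      have ha : (((properColorings H q (modLists L vs ↑k j)).filter
            (fun c => c (vs.get k) = j)).card : ℝ) = f ↑k - f (↑k + 1) := by
        linarith
      unfold margin
      rw [ha]
      have hb : ((properColorings H q (modLists L vs (↑k : ℕ) j)).card : ℝ) = f ↑k := rfl
      rw [hb]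
      field_simp
      ring
    calc (∏ k : Fin vs.length,
            (1 - margin H q (modLists L vs k j) (vs.get k) j))
        = ∏ k : Fin vs.length, f (↑k + 1) / f ↑k :=
          Finset.prod_congr rfl (fun k _ => hfac k)
      _ = ∏ k ∈ Finset.range vs.length, f (k + 1) / f k :=
          Fin.prod_univ_eq_prod_range (fun k => f (k + 1) / f k) vs.length
      _ = f vs.length / f 0 := prod_div_telescope f vs.length (fun k _ => hfne k)
      _ = _ := by simp only [hf, hM0 j]
  have hbdry : ∀ j : Fin q,
      (properColorings H q (modLists L vs vs.length j)).filter (fun c => c v = j) =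
      (properColorings G q L).filter (fun c => c v = j) := by
    intro j
    ext c
    rw [Finset.mem_filter, Finset.mem_filter, mem_properColorings,
      mem_properColorings]
    have htk : vs.take vs.length = vs := List.take_length (l := vs)
    constructor
    · rintro ⟨⟨h1, h2⟩, h3⟩
      refine ⟨⟨?_, ?_⟩, h3⟩
      · intro u
        have h5 := h1 u; unfold modLists at h5; rw [htk] at h5
        by_cases hu : u ∈ vs
        · rw [if_pos hu] at h5; exact Finset.mem_of_mem_erase h5
        · rw [if_neg hu] at h5; exact h5
      · intro u w huw
        by_cases hu : u = v
        · subst hu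
          have hw : w ∈ vs := (hadjvs w).mpr huw
          have h5 := h1 w; unfold modLists at h5; rw [htk, if_pos hw] at h5
          exact fun h => (Finset.mem_erase.mp h5).1 (h.symm.trans h3)
        · by_cases hw : w = v
          · subst hw
            have hu2 : u ∈ vs := (hadjvs u).mpr huw.symm
            have h5 := h1 u; unfold modLists at h5; rw [htk, if_pos hu2] at h5
            exact fun h => (Finset.mem_erase.mp h5).1 (h.trans h3)
          · exact h2 u w ⟨huw, hu, hw⟩
    · rintro ⟨⟨h1, h2⟩, h3⟩
      refine ⟨⟨?_, fun u w huw => h2 u w huw.1⟩, h3⟩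
      intro u
      unfold modLists; rw [htk]
      by_cases hu : u ∈ vs
      · rw [if_pos hu]
        refine Finset.mem_erase.mpr ⟨?_, h1 u⟩
        have hadj : G.Adj v u := (hadjvs u).mp hu
        have h5 := h2 v u hadj
        rw [h3] at h5
        exact fun h => h5 h.symm
      · rw [if_neg hu]; exact h1 u
  have hcount : ∀ j ∈ L v,
      (properColorings H q (modLists L vs vs.length j)).card =
      (L v).card * ((properColorings G q L).filter (fun c => c v = j)).card := by
    intro j hj
    have hMv : modLists L vs vs.length j v = L v := by
      unfold modLists; rw [List.take_length, if_neg hvnot]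
    have hmemLv : ∀ c ∈ properColorings H q (modLists L vs vs.length j),
        c v ∈ L v := by
      intro c hc
      have h5 := (mem_properColorings.mp hc).1 v
      rwa [hMv] at h5
    rw [Finset.card_eq_sum_card_fiberwise hmemLv]
    rw [Finset.sum_congr rfl (fun j' hj' =>
      fiber_card_eq H v hiso (modLists L vs vs.length j)
        (hMv ▸ hj' : j' ∈ modLists L vs vs.length j v) (hMv ▸ hj))]
    rw [hbdry j, Finset.sum_const, smul_eq_mul]
  have hsum : ∑ j ∈ L v,
      ((properColorings G q L).filter (fun c => c v = j)).card
      = (properColorings G q L).card := by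
    symm
    apply Finset.card_eq_sum_card_fiberwise
    intro c hc
    exact (mem_properColorings.mp hc).1 v
  have hT : 0 < (properColorings G q L).card :=
    Finset.card_pos.mpr (exists_proper_coloring G.edgeFinset.card G L le_rfl hL)
  have hLv : 0 < (L v).card := Finset.card_pos.mpr ⟨i, hi⟩
  have hN0 : (0 : ℝ) < ((properColorings H q L).card : ℝ) := by
    have h5 := hNpos 0 i; rw [hM0 i] at h5; exact_mod_cast h5
  have hnum : ∀ j ∈ L v,
      (∏ k : Fin vs.length,
        (1 - margin H q (modLists L vs k j) (vs.get k) j)) =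
      ((L v).card : ℝ) *
        (((properColorings G q L).filter (fun c => c v = j)).card : ℝ) /
        ((properColorings H q L).card : ℝ) := by
    intro j hj
    rw [hprod j, hcount j hj]
    push_cast
    ring
  rw [hnum i hi, Finset.sum_congr rfl (fun j hj => hnum j hj)]
  have hsumR : ∑ j ∈ L v,
      (((properColorings G q L).filter (fun c => c v = j)).card : ℝ)
      = ((properColorings G q L).card : ℝ) := by
    rw [← Nat.cast_sum, hsum]
  have h1 : ∑ j ∈ L v, (((L v).card : ℝ) *
      (((properColorings G q L).filter (fun c => c v = j)).card : ℝ) /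
      ((properColorings H q L).card : ℝ))
      = ((L v).card : ℝ) * ((properColorings G q L).card : ℝ) /
        ((properColorings H q L).card : ℝ) := by
    rw [← Finset.sum_div, ← Finset.mul_sum, hsumR]
  rw [h1]
  unfold margin
  have hTne : ((properColorings G q L).card : ℝ) ≠ 0 := by exact_mod_cast hT.ne'
  have hLvne : ((L v).card : ℝ) ≠ 0 := by exact_mod_cast hLv.ne'
  field_simp
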